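/- arXiv:2412.10066 — 2 statements merged into one kernel-verified Lean document; each statement's English description precedes it below -/
import Mathlib

section
/- LIA quantifier elimination for constraint implication: let β be a ground term and Γ₁ = (s₁ ⪯ β ∧ … ∧ sₙ ⪯ β), Γ₂ = (t₁ ⪯ β ∧ … ∧ t_m ⪯ β) two constraints. Then the condition 'for every substitution σ grounding for Γ₁ with Γ₁σ true there exists a substitution σ' such that Γ₂σσ' is true' holds if and only if the implication lic(s₁ ⪯ β) ∧ … ∧ lic(sₙ ⪯ β) → lic(t₁ ⪯ β) ∧ … ∧ lic(t_m ⪯ β) is valid, i.e. true under every assignment of positive integers to its variables. -/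
namespace NGCC

inductive Tm (F : Type) : Type
  | var : ℕ → Tm F
  | app : F → List (Tm F) → Tm F

instance {F : Type} : Inhabited (Tm F) := ⟨Tm.var 0⟩

namespace Tm
variable {F : Type}

def subst (σ : ℕ → Tm F) : Tm F → Tm F
  | var x => σ x
  | app f ts => app f (ts.attach.map fun t => t.1.subst σ)
  decreasing_by simp only [app.sizeOf_spec]; have h := List.sizeOf_lt_of_mem t.2; omega

def varsList : Tm F → List ℕ
  | var x => [x]
  | app _ ts => (ts.attach.map fun t => t.1.varsList).flatten
  decreasing_by simp only [app.sizeOf_spec]; have h := List.sizeOf_lt_of_mem t.2; omega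

def varsIn (t : Tm F) : Set ℕ := {x | x ∈ t.varsList}

def Ground (t : Tm F) : Prop := t.varsList = []

def size : Tm F → ℕ
  | var _ => 1
  | app _ ts => 1 + (ts.attach.map fun t => t.1.size).sum
  decreasing_by simp only [app.sizeOf_spec]; have h := List.sizeOf_lt_of_mem t.2; omega

def count (x : ℕ) : Tm F → ℕ
  | var y => if y = x then 1 else 0
  | app _ ts => (ts.attach.map fun t => count x t.1).sum
  decreasing_by simp only [app.sizeOf_spec]; have h := List.sizeOf_lt_of_mem t.2; omega

def eval {α : Type} (I : F → List α → α) (v : ℕ → α) : Tm F → α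
  | var x => v x
  | app f ts => I f (ts.attach.map fun t => t.1.eval I v)
  decreasing_by simp only [app.sizeOf_spec]; have h := List.sizeOf_lt_of_mem t.2; omega

end Tm


abbrev Subst (F : Type) := ℕ → Tm F

def Subst.dom {F : Type} (σ : Subst F) : Set ℕ := {x | σ x ≠ Tm.var x}

def Subst.comp {F : Type} (σ δ : Subst F) : Subst F := fun x => (σ x).subst δ

structure CTerm (F : Type) where
  constr : Set (Tm F)
  term : Tm F

abbrev CClass (F : Type) := Set (CTerm F)

variable {F : Type}

/-- Application of a substitution to a constraint (set of atoms `u ∈ M`). -/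
def substConstr (Γ : Set (Tm F)) (σ : Subst F) : Set (Tm F) := (fun u => u.subst σ) '' Γ

def CTerm.subst (ct : CTerm F) (σ : Subst F) : CTerm F :=
  ⟨substConstr ct.constr σ, ct.term.subst σ⟩

def substClass (A : CClass F) (σ : Subst F) : CClass F := (fun ct => ct.subst σ) '' A

/-- `Γσ` is true: every atom of `Γσ` belongs to `M`. -/
def ConstrHolds (M : Set (Tm F)) (Γ : Set (Tm F)) (σ : Subst F) : Prop :=
  substConstr Γ σ ⊆ M

/-- Satisfiability of a constraint with respect to `M`. -/
def ConstrSat (M : Set (Tm F)) (Γ : Set (Tm F)) : Prop :=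
  ∃ σ : Subst F, ConstrHolds M Γ σ

/-- `σ` is grounding for the class `A` (for all its constrained terms). -/
def GroundingForClass (σ : Subst F) (A : CClass F) : Prop :=
  ∀ ct ∈ A, (ct.term.subst σ).Ground ∧ ∀ u ∈ ct.constr, (u.subst σ).Ground

/-- Separating variables of a class. -/
def sepVars (A : CClass F) : Set ℕ := ⋂ ct ∈ A, (CTerm.term ct).varsIn

/-- All variables of the terms of a class. -/
def termVars (A : CClass F) : Set ℕ := ⋃ ct ∈ A, (CTerm.term ct).varsIn

/-- Free variables of a class. -/
def freeVars (A : CClass F) : Set ℕ := termVars A \ sepVars A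

/-- All variables occurring in a class (terms and constraints). -/
def varsAll (A : CClass F) : Set ℕ :=
  ⋃ ct ∈ A, ((CTerm.term ct).varsIn ∪ ⋃ u ∈ CTerm.constr ct, u.varsIn)

/-- `gnd'(A)`. -/
def gnd' (M : Set (Tm F)) (A : CClass F) : Set (CClass F) :=
  { B | ∃ σ : Subst F, Subst.dom σ = sepVars A ∧ (∀ x ∈ Subst.dom σ, (σ x).Ground) ∧
      B = { ct' | ∃ ct ∈ A, ConstrSat M (substConstr (CTerm.constr ct) σ) ∧ ct' = ct.subst σ } }

/-- `gnd(A)`: sets of ground terms. -/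
def gnd (M : Set (Tm F)) (A : CClass F) : Set (Set (Tm F)) :=
  { S | ∃ B ∈ gnd' M A,
      S = { t | ∃ σ : Subst F, GroundingForClass σ B ∧
              ∃ ct ∈ B, ConstrHolds M (CTerm.constr ct) σ ∧ t = (CTerm.term ct).subst σ } }

/-- The elements of `gnd(A)` regarded as classes of constrained ground terms. -/
def gndCl (M : Set (Tm F)) (A : CClass F) : Set (CClass F) :=
  { S | ∃ B ∈ gnd' M A,
      S = { ct' | ∃ σ : Subst F, GroundingForClass σ B ∧
              ∃ ct ∈ B, ConstrHolds M (CTerm.constr ct) σ ∧ ct' = ct.subst σ } }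

/-- `B` subsumes `A`. -/
def Subsumes (M : Set (Tm F)) (B A : CClass F) : Prop :=
  ∀ A' ∈ gnd M A, ∃ B' ∈ gnd M B, A' ⊆ B'

/-- `A` is `M`-constrained: the atom `sᵢ ∈ M` occurs in `Γᵢ` for each `Γᵢ ∥ sᵢ ∈ A`. -/
def MConstrained (A : CClass F) : Prop := ∀ ct ∈ A, CTerm.term ct ∈ CTerm.constr ct

/-- `ρ` is a renaming of the free variables of `A` to fresh variables. -/
def IsNormRenaming (A : CClass F) (ρ : Subst F) : Prop :=
  (∀ x, ∃ y, ρ x = Tm.var y) ∧ (∀ x, x ∉ freeVars A → ρ x = Tm.var x) ∧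
  (∀ x ∈ freeVars A, ∀ x' ∈ freeVars A, ρ x = ρ x' → x = x') ∧
  (∀ x ∈ freeVars A, ∀ y, ρ x = Tm.var y → y ∉ varsAll A)

/-- The normal class `norm(A)` for the renaming `ρ`. -/
def normC (A : CClass F) (ρ : Subst F) : CClass F :=
  { ct' | ∃ ct ∈ A, ct' = ⟨CTerm.constr ct ∪ substConstr (CTerm.constr ct) ρ, CTerm.term ct⟩ } ∪
  { ct' | ∃ ct ∈ A, ((CTerm.term ct).varsIn ∩ freeVars A).Nonempty ∧
      ct' = ⟨CTerm.constr ct ∪ substConstr (CTerm.constr ct) ρ, (CTerm.term ct).subst ρ⟩ }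

/-- `Aμ` for a grounding substitution `μ`: the set of ground terms
`{sμ | Γ ∥ s ∈ A and Γμ true}`. -/
def applyClass (M : Set (Tm F)) (A : CClass F) (μ : Subst F) : Set (Tm F) :=
  { t | ∃ ct ∈ A, ConstrHolds M (CTerm.constr ct) μ ∧ t = (CTerm.term ct).subst μ }

/-- Subterm relation. -/
inductive Subterm {F : Type} : Tm F → Tm F → Prop
  | refl (t : Tm F) : Subterm t t
  | app {s t : Tm F} (f : F) (ts : List (Tm F)) : t ∈ ts → Subterm s t → Subterm s (Tm.app f ts)

/-- `s` occurs as a (sub)term in `Π`. -/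
def OccursIn (s : Tm F) (P : Set (CClass F)) : Prop :=
  ∃ A ∈ P, ∃ ct ∈ A, Subterm s (CTerm.term ct) ∨ ∃ u ∈ CTerm.constr ct, Subterm s u

/-- `M` is `Π`-closed for the ground term `t`. -/
def PiClosed (M : Set (Tm F)) (P : Set (CClass F)) (t : Tm F) : Prop :=
  ∀ s, OccursIn s P → ∀ σ : Subst F, s.subst σ ∈ M →
    ∀ δ : Subst F, (∀ x, σ x ≠ δ x → δ x = t) → s.subst δ ∈ M

/-- Semantic equational consequence: every model of the (implicitly universally
quantified) equations is a model of `s ≈ t`. -/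
def Entails (Eqs : Set (Tm F × Tm F)) (s t : Tm F) : Prop :=
  ∀ (α : Type) (_ : Nonempty α) (I : F → List α → α) (v : ℕ → α),
    (∀ e ∈ Eqs, ∀ w : ℕ → α, Tm.eval I w e.1 = Tm.eval I w e.2) →
    Tm.eval I v s = Tm.eval I v t

/-- `gnd_M(E)`: ground instances of equations of `E` with all ground terms in `M`. -/
def gndM (M : Set (Tm F)) (E : Set (Tm F × Tm F)) : Set (Tm F × Tm F) :=
  { e | ∃ p ∈ E, ∃ σ : Subst F,
      e = (Tm.subst σ p.1, Tm.subst σ p.2) ∧ Tm.subst σ p.1 ∈ M ∧ Tm.subst σ p.2 ∈ M }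

def IsUnifier (μ : Subst F) (s t : Tm F) : Prop := s.subst μ = t.subst μ

def IsMGU (μ : Subst F) (s t : Tm F) : Prop :=
  IsUnifier μ s t ∧ ∀ τ : Subst F, IsUnifier τ s t → ∃ δ : Subst F, τ = Subst.comp μ δ

/-- Simultaneous most general unifier of the equations `s₁ = t₁` and `s₂ = t₂`. -/
def IsSimMGU (μ : Subst F) (s₁ t₁ s₂ t₂ : Tm F) : Prop :=
  IsUnifier μ s₁ t₁ ∧ IsUnifier μ s₂ t₂ ∧
  ∀ τ : Subst F, IsUnifier τ s₁ t₁ → IsUnifier τ s₂ t₂ → ∃ δ : Subst F, τ = Subst.comp μ δ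

/-- Conjoin a constraint to every constrained term of a class. -/
def addConstr (A : CClass F) (Γ : Set (Tm F)) : CClass F :=
  { ct' | ∃ ct ∈ A, ct' = ⟨CTerm.constr ct ∪ Γ, CTerm.term ct⟩ }

/-- The rules of the calculus CC(X). -/
inductive Step {F : Type} (M : Set (Tm F)) : Set (CClass F) → Set (CClass F) → Prop
  | merge (P : Set (CClass F)) (A B C' : CClass F) (ρA ρB μ : Subst F) (ct₁ ct₂ : CTerm F)
      (hA : A ∈ P) (hB : B ∈ P)
      (hρA : IsNormRenaming A ρA) (hρB : IsNormRenaming B ρB)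
      (h1 : ct₁ ∈ A) (h2 : ct₂ ∈ B)
      (hmgu : IsMGU μ ct₁.term ct₂.term)
      (hC' : C' = substClass (addConstr (normC A ρA) (ct₁.constr ∪ ct₂.constr) ∪
                               addConstr (normC B ρB) (ct₁.constr ∪ ct₂.constr)) μ)
      (hnsub : ∀ C ∈ P, ¬ Subsumes M C C') :
      Step M P (insert C' P)
  | deduction (P : Set (CClass F)) (A B C' : CClass F) (f : F)
      (ss ts ss' ts' : List (Tm F)) (Γ Δ : Set (Tm F)) (Γs Δs : List (Set (Tm F))) (μ : Subst F)
      (hA : A ∈ P) (hB : B ∈ P)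
      (h1 : (⟨Γ, Tm.app f ss⟩ : CTerm F) ∈ A)
      (h2 : (⟨Δ, Tm.app f ts⟩ : CTerm F) ∈ B)
      (hl1 : ss'.length = ss.length) (hl2 : ts'.length = ss.length)
      (hl3 : ts.length = ss.length) (hl4 : Γs.length = ss.length) (hl5 : Δs.length = ss.length)
      (hside : ∀ i < ss.length, ∃ D ∈ P, ∃ ρ : Subst F, IsNormRenaming D ρ ∧
          (⟨Γs[i]!, ss'[i]!⟩ : CTerm F) ∈ normC D ρ ∧ (⟨Δs[i]!, ts'[i]!⟩ : CTerm F) ∈ normC D ρ)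
      (hmgu : IsSimMGU μ (Tm.app f ss') (Tm.app f ss) (Tm.app f ts') (Tm.app f ts))
      (hC' : C' = substClass
          ({⟨Γ ∪ Δ ∪ ⋃₀ {G | G ∈ Γs} ∪ ⋃₀ {G | G ∈ Δs}, Tm.app f ss'⟩,
            ⟨Γ ∪ Δ ∪ ⋃₀ {G | G ∈ Γs} ∪ ⋃₀ {G | G ∈ Δs}, Tm.app f ts'⟩} : CClass F) μ)
      (hnsub : ∀ C ∈ P, ¬ Subsumes M C C') :
      Step M P (insert C' P)
  | subsump (P : Set (CClass F)) (A B : CClass F)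
      (hA : A ∈ P) (hB : B ∈ P) (hne : A ≠ B) (hsub : Subsumes M B A) :
      Step M P (P \ {A})

/-- The single-term class `{f(x₁,…,x_k) ∈ M ∥ f(x₁,…,x_k)}`. -/
def singleTermClass (ar : F → ℕ) (f : F) : CClass F :=
  {⟨{Tm.app f ((List.range (ar f)).map Tm.var)}, Tm.app f ((List.range (ar f)).map Tm.var)⟩}

/-- The initial state `Π₀` of CC(X) for the equations `E`. -/
def initState (ar : F → ℕ) (E : Set (Tm F × Tm F)) : Set (CClass F) :=
  { A | ∃ p ∈ E, A = ({⟨{p.1, p.2}, p.1⟩, ⟨{p.1, p.2}, p.2⟩} : CClass F) } ∪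
  { A | ∃ f : F, A = singleTermClass ar f }

/-- `B` subsumes `A` by matching. -/
def SubsumesByMatching (M : Set (Tm F)) (B A : CClass F) : Prop :=
  ∃ σ : Subst F, Subst.dom σ ⊆ sepVars B ∧ (∀ x ∈ sepVars B, (σ x).varsIn ⊆ varsAll A) ∧
    ∀ ct ∈ A, ∃ τ : Subst F, Subst.dom τ ⊆ freeVars B ∧
      (∀ y ∈ freeVars B, (τ y).varsIn ⊆ varsAll A) ∧
      ∃ ct' ∈ B, CTerm.term ct = ((CTerm.term ct').subst σ).subst τ ∧
        ∀ δ : Subst F, ConstrHolds M (CTerm.constr ct) δ →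
          ∃ δ' : Subst F,
            ConstrHolds M (substConstr (substConstr (substConstr (CTerm.constr ct') σ) τ) δ) δ'

/-- `M` determined by the symbol-count ordering and a bound `β`. -/
def Mle (β : Tm F) : Set (Tm F) := { t | t.Ground ∧ t.size ≤ β.size }

def varsFinset (t : Tm F) : Finset ℕ := t.varsList.toFinset

/-- Truth of the LIA abstraction `lic(t ⪯ β)` under an integer assignment `v`. -/
def licHolds (t β : Tm F) (v : ℕ → ℕ) : Prop :=
  (∀ x ∈ varsFinset t, 1 ≤ v x) ∧
  (∑ x ∈ varsFinset t, (t.count x : ℤ) * (v x : ℤ)) ≤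
    (β.size : ℤ) - ((t.size : ℤ) - ∑ x ∈ varsFinset t, (t.count x : ℤ))


section Aux
variable {F : Type}
namespace Tm

theorem strongInd {motive : Tm F → Prop}
    (hvar : ∀ x, motive (var x))
    (happ : ∀ (f : F) (ts : List (Tm F)), (∀ t ∈ ts, motive t) → motive (app f ts)) :
    ∀ t, motive t
  | var x => hvar x
  | app f ts => happ f ts (fun t ht => strongInd hvar happ t)
  decreasing_by simp only [app.sizeOf_spec]; have h := List.sizeOf_lt_of_mem ht; omega

theorem subst_app (σ : ℕ → Tm F) (f : F) (ts : List (Tm F)) :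
    (app f ts).subst σ = app f (ts.map (·.subst σ)) := by
  rw [subst]; simp

theorem varsList_app (f : F) (ts : List (Tm F)) :
    (app f ts).varsList = (ts.map varsList).flatten := by
  rw [varsList]; simp

theorem size_app (f : F) (ts : List (Tm F)) :
    (app f ts).size = 1 + (ts.map size).sum := by
  rw [size]; simp

theorem count_app (x : ℕ) (f : F) (ts : List (Tm F)) :
    count x (app f ts) = (ts.map (count x)).sum := by
  rw [count]; simp

theorem one_le_size (t : Tm F) : 1 ≤ t.size := by
  induction t using strongInd with
  | hvar x => simp [size]
  | happ f ts ih => rw [size_app]; omega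

theorem ground_of_subst (σ : ℕ → Tm F) (t : Tm F)
    (h : ∀ x ∈ t.varsList, (σ x).Ground) : (t.subst σ).Ground := by
  induction t using strongInd with
  | hvar x =>
      have := h x (by simp [varsList])
      simpa [subst] using this
  | happ f ts ih =>
      rw [subst_app]
      unfold Ground
      rw [varsList_app, List.flatten_eq_nil_iff]
      intro l hl
      simp only [List.map_map, List.mem_map] at hl
      obtain ⟨t, ht, rfl⟩ := hl
      refine ih t ht (fun x hx => h x ?_)
      rw [varsList_app]
      exact List.mem_flatten.2 ⟨t.varsList, List.mem_map_of_mem ht, hx⟩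

theorem subst_eq_of_ground (σ : ℕ → Tm F) (t : Tm F) (h : t.Ground) : t.subst σ = t := by
  induction t using strongInd with
  | hvar x => simp [Ground, varsList] at h
  | happ f ts ih =>
      unfold Ground at h
      rw [varsList_app, List.flatten_eq_nil_iff] at h
      rw [subst_app]
      congr 1
      conv_rhs => rw [show ts = ts.map id from (List.map_id ts).symm]
      refine List.map_congr_left (fun t ht => ih t ht (h _ (List.mem_map_of_mem ht)))

theorem size_subst (σ : ℕ → Tm F) (t : Tm F) :
    (t.subst σ).size + t.varsList.length
      = t.size + (t.varsList.map (fun x => (σ x).size)).sum := by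
  induction t using strongInd with
  | hvar x => simp [subst, varsList, size]; omega
  | happ f ts ih =>
      rw [subst_app, size_app, varsList_app, size_app]
      rw [List.length_flatten, List.map_flatten, List.sum_flatten]
      simp only [List.map_map]
      induction ts with
      | nil => simp
      | cons hd tl ihl =>
          have h1 := ih hd (by simp)
          have h2 := ihl (fun t ht => ih t (List.mem_cons_of_mem _ ht))
          simp only [List.map_cons, List.sum_cons, Function.comp] at h1 h2 ⊢
          omega

theorem count_eq_listCount (x : ℕ) (t : Tm F) : t.count x = t.varsList.count x := by
  induction t using strongInd with
  | hvar y => rcases eq_or_ne y x with h | h <;>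
      simp [count, varsList, h, List.count_singleton, List.count_eq_zero]
  | happ f ts ih =>
      rw [count_app, varsList_app]
      induction ts with
      | nil => simp
      | cons hd tl ihl =>
          have h1 := ih hd (by simp)
          have h2 := ihl (fun t ht => ih t (List.mem_cons_of_mem _ ht))
          simp only [List.map_cons, List.sum_cons, List.flatten_cons, List.count_append] at *
          omega

end Tm

theorem list_sum_map_count (l : List ℕ) (g : ℕ → ℕ) :
    (l.map g).sum = ∑ x ∈ l.toFinset, l.count x * g x := by
  have := Finset.sum_multiset_map_count (l : Multiset ℕ) g
  simpa using this

theorem varsFinset_eq (t : Tm F) : varsFinset t = t.varsList.toFinset := rfl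

theorem sum_map_varsList (t : Tm F) (g : ℕ → ℕ) :
    (t.varsList.map g).sum = ∑ x ∈ varsFinset t, t.count x * g x := by
  rw [list_sum_map_count, varsFinset_eq]
  exact Finset.sum_congr rfl fun x _ => by rw [Tm.count_eq_listCount]

theorem varsList_length_eq (t : Tm F) :
    t.varsList.length = ∑ x ∈ varsFinset t, t.count x := by
  have := sum_map_varsList t (fun _ => 1)
  simpa using this

theorem licHolds_iff_size (t β : Tm F) (σ : Subst F) :
    licHolds t β (fun x => (σ x).size) ↔ (t.subst σ).size ≤ β.size := by
  have hA := Tm.size_subst σ t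
  have hB := sum_map_varsList t (fun x => (σ x).size)
  have hL := varsList_length_eq t
  unfold licHolds
  have hcast1 : (∑ x ∈ varsFinset t, (t.count x : ℤ) * ((σ x).size : ℤ))
      = ((∑ x ∈ varsFinset t, t.count x * (σ x).size : ℕ) : ℤ) := by push_cast; ring
  have hcast2 : (∑ x ∈ varsFinset t, (t.count x : ℤ))
      = ((∑ x ∈ varsFinset t, t.count x : ℕ) : ℤ) := by push_cast; ring
  rw [hcast1, hcast2]
  constructor
  · rintro ⟨-, h2⟩; omega
  · intro h
    refine ⟨fun x _ => Tm.one_le_size _, by omega⟩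

def gterm (f : F) : ℕ → Tm F
  | 0 => Tm.app f []
  | n+1 => Tm.app f [gterm f n]

theorem gterm_ground (f : F) (n : ℕ) : (gterm f n).Ground := by
  induction n with
  | zero => simp [gterm, Tm.Ground, Tm.varsList_app]
  | succ n ih => simpa [gterm, Tm.Ground, Tm.varsList_app] using ih

theorem gterm_size (f : F) (n : ℕ) : (gterm f n).size = n + 1 := by
  induction n with
  | zero => simp [gterm, Tm.size_app]
  | succ n ih => simp [gterm, Tm.size_app, ih]; omega

end Aux

/-- LIA Quantifier Elimination. -/
theorem lia_quantifier_elimination {F : Type} [Nonempty F]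
    (β : Tm F) (hβ : β.Ground) (Γ₁ Γ₂ : List (Tm F)) :
    (∀ σ : Subst F, (∀ s ∈ Γ₁, (Tm.subst σ s).Ground) →
        (∀ s ∈ Γ₁, (Tm.subst σ s).size ≤ β.size) →
        ∃ σ' : Subst F, ∀ u ∈ Γ₂,
          (Tm.subst σ' (Tm.subst σ u)).Ground ∧ (Tm.subst σ' (Tm.subst σ u)).size ≤ β.size)
    ↔ (∀ v : ℕ → ℕ, (∀ x, 1 ≤ v x) →
        (∀ s ∈ Γ₁, licHolds s β v) → ∀ u ∈ Γ₂, licHolds u β v) := by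
  obtain ⟨f⟩ := (inferInstance : Nonempty F)
  constructor
  · intro H v hv hg1 u hu
    set σ : Subst F := fun x => gterm f (v x - 1) with hσ
    have hsize : ∀ x, (σ x).size = v x := fun x => by
      rw [hσ]; rw [gterm_size]; have := hv x; omega
    have hveq : (fun x => (σ x).size) = v := funext hsize
    have hgr : ∀ x, (σ x).Ground := fun x => gterm_ground f _
    obtain ⟨σ', hσ'⟩ := H σ (fun s _ => Tm.ground_of_subst _ _ (fun x _ => hgr x))
      (fun s hs => by
        have h := hg1 s hs
        rw [← hveq] at h
        exact (licHolds_iff_size s β σ).1 h)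
    have h2 := hσ' u hu
    have hgu : (Tm.subst σ u).Ground := Tm.ground_of_subst _ _ (fun x _ => hgr x)
    rw [Tm.subst_eq_of_ground σ' _ hgu] at h2
    have h3 := (licHolds_iff_size u β σ).2 h2.2
    rwa [hveq] at h3
  · intro H σ hg hsz
    refine ⟨fun _ => Tm.app f [], fun u hu => ?_⟩
    have hv : ∀ x, 1 ≤ (σ x).size := fun x => Tm.one_le_size _
    have hlic : licHolds u β (fun x => (σ x).size) :=
      H (fun x => (σ x).size) hv (fun s hs => (licHolds_iff_size s β σ).2 (hsz s hs)) u hu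
    have husz : (u.subst σ).size ≤ β.size := (licHolds_iff_size u β σ).1 hlic
    constructor
    · exact Tm.ground_of_subst _ _ (fun x _ => by simp [Tm.Ground, Tm.varsList_app])
    · have hA := Tm.size_subst (fun _ => (Tm.app f [] : Tm F)) (u.subst σ)
      simp only [Tm.size_app, List.map_nil, List.sum_nil] at hA
      rw [List.map_const', List.sum_replicate, smul_eq_mul] at hA
      show (Tm.subst (fun _ => (Tm.app f [] : Tm F)) (Tm.subst σ u)).size ≤ β.size
      omega


end NGCC
end

section
/- For the symbol-count ordering, the set M = {t ground | size(t) ≤ size(β)} determined by a ground term β is Π-closed with respect to any set Π of congruence classes and any constant c ∈ M; that is, for every (sub)term s occurring in Π and every substitution σ grounding for s with sσ ∈ M, also sδ ∈ M for every substitution δ such that whenever xσ ≠ xδ for a variable x, then xδ = c. -/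
namespace NGCC

variable {F : Type}

theorem Tm.size_pos : ∀ t : Tm F, 1 ≤ t.size
  | Tm.var _ => by rw [Tm.size]
  | Tm.app f ts => by rw [Tm.size]; omega

theorem Tm.size_app_s18 (f : F) (ts : List (Tm F)) :
    (Tm.app f ts).size = 1 + (ts.map Tm.size).sum := by
  rw [Tm.size]; simp

theorem Tm.varsList_app_s18 (f : F) (ts : List (Tm F)) :
    (Tm.app f ts).varsList = (ts.map Tm.varsList).flatten := by
  rw [Tm.varsList]; simp

theorem Tm.subst_app_s18 (σ : ℕ → Tm F) (f : F) (ts : List (Tm F)) :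
    (Tm.app f ts).subst σ = Tm.app f (ts.map fun t => t.subst σ) := by
  rw [Tm.subst]; simp

theorem Tm.mem_varsList_subst (σ : ℕ → Tm F) :
    ∀ (t : Tm F) (y : ℕ),
      y ∈ (t.subst σ).varsList ↔ ∃ x ∈ t.varsList, y ∈ (σ x).varsList
  | Tm.var x, y => by
      rw [Tm.subst, Tm.varsList]; simp
  | Tm.app f ts, y => by
      rw [Tm.subst_app_s18, Tm.varsList_app_s18, Tm.varsList_app_s18]
      simp only [List.map_map, List.mem_flatten, List.mem_map]
      constructor
      · rintro ⟨l, ⟨t, ht, rfl⟩, hy⟩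
        obtain ⟨x, hx, hy'⟩ := (Tm.mem_varsList_subst σ t y).mp hy
        exact ⟨x, ⟨t.varsList, ⟨t, ht, rfl⟩, hx⟩, hy'⟩
      · rintro ⟨x, ⟨l, ⟨t, ht, rfl⟩, hx⟩, hy⟩
        exact ⟨(t.subst σ).varsList, ⟨t, ht, rfl⟩,
          (Tm.mem_varsList_subst σ t y).mpr ⟨x, hx, hy⟩⟩
  termination_by t _ => sizeOf t
  decreasing_by all_goals (simp only [Tm.app.sizeOf_spec]; have h := List.sizeOf_lt_of_mem ht; omega)

theorem Tm.ground_subst_iff (σ : ℕ → Tm F) (t : Tm F) :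
    (t.subst σ).Ground ↔ ∀ x ∈ t.varsList, (σ x).Ground := by
  simp only [Tm.Ground, List.eq_nil_iff_forall_not_mem]
  constructor
  · intro h x hx y hy
    exact h y ((Tm.mem_varsList_subst σ t y).mpr ⟨x, hx, hy⟩)
  · intro h y hy
    obtain ⟨x, hx, hy'⟩ := (Tm.mem_varsList_subst σ t y).mp hy
    exact h x hx y hy'

theorem Tm.size_subst_mono (σ δ : ℕ → Tm F) :
    ∀ t : Tm F, (∀ x ∈ t.varsList, (δ x).size ≤ (σ x).size) →
      (t.subst δ).size ≤ (t.subst σ).size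
  | Tm.var x, h => by
      rw [Tm.subst, Tm.subst]
      exact h x (by rw [Tm.varsList]; simp)
  | Tm.app f ts, h => by
      rw [Tm.subst_app_s18, Tm.subst_app_s18, Tm.size_app_s18, Tm.size_app_s18, List.map_map, List.map_map]
      have : ((ts.map (Tm.size ∘ fun t => t.subst δ)).sum) ≤
          ((ts.map (Tm.size ∘ fun t => t.subst σ)).sum) := by
        apply List.sum_le_sum
        intro t ht
        exact Tm.size_subst_mono σ δ t (fun x hx =>
          h x (by rw [Tm.varsList_app_s18]; simp only [List.mem_flatten, List.mem_map];
                  exact ⟨t.varsList, ⟨t, ht, rfl⟩, hx⟩))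
      omega
  termination_by t _ => sizeOf t
  decreasing_by all_goals (simp only [Tm.app.sizeOf_spec]; have h := List.sizeOf_lt_of_mem ht; omega)

/-- `M = {t ground | size(t) ≤ size(β)}` is `Π`-closed with
respect to any set `Π` of congruence classes and any constant `c ∈ M`. -/
theorem Mle_piClosed {F : Type} [Nonempty F]
    (β : Tm F) (hβ : β.Ground) (P : Set (CClass F)) (c : F)
    (hc : Tm.app c [] ∈ Mle β) :
    PiClosed (Mle β) P (Tm.app c []) := by
  intro s _ σ hσ δ hδ
  obtain ⟨hg, hs⟩ := hσ
  have hsize_c : (Tm.app c [] : Tm F).size = 1 := by rw [Tm.size_app_s18]; simp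
  have hground_c : (Tm.app c [] : Tm F).Ground := by rw [Tm.Ground, Tm.varsList_app_s18]; simp
  have hkey : ∀ x ∈ s.varsList, (δ x).Ground ∧ (δ x).size ≤ (σ x).size := by
    intro x hx
    have hgx : (σ x).Ground := (Tm.ground_subst_iff σ s).mp hg x hx
    by_cases h : σ x = δ x
    · rw [← h]; exact ⟨hgx, le_refl _⟩
    · have := hδ x h
      rw [this]
      exact ⟨hground_c, by rw [hsize_c]; exact Tm.size_pos _⟩
  constructor
  · exact (Tm.ground_subst_iff δ s).mpr (fun x hx => (hkey x hx).1)
  · exact le_trans (Tm.size_subst_mono σ δ s (fun x hx => (hkey x hx).2)) hs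

end NGCC
end
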